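/- If (w_i) is a positive sequence such that there exists ε>0 and k₀ with 1/w_k² ≥ ε·∑_{i=k}^∞ 1/w_i² for all k ≥ k₀, then for all k ≥ k₀ one has ∑_{ℓ=k}^∞ 1/w_ℓ ≤ (π/√6)·√(2/ε³)·(1/w_k). In particular w_k · ∑_{ℓ=k}^∞ 1/w_ℓ is bounded uniformly in k ≥ k₀. -/

import Mathlib

theorem stmt_1 (w : ℕ → ℝ) (hw : ∀ i, 0 < w i)
    (hsum : Summable (fun i => 1 / (w i) ^ 2))
    (ε : ℝ) (hε : 0 < ε) (k₀ : ℕ)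
    (hyp : ∀ k, k₀ ≤ k → ε * ∑' i : ℕ, 1 / (w (k + i)) ^ 2 ≤ 1 / (w k) ^ 2) :
    ∀ k, k₀ ≤ k →
      ∑' ℓ : ℕ, 1 / w (k + ℓ) ≤
        (Real.pi / Real.sqrt 6) * Real.sqrt (2 / ε ^ 3) * (1 / w k) := by
  intro k hk
  set a : ℕ → ℝ := fun ℓ => 1 / (w (k + ℓ)) ^ 2 with ha_def
  have ha_pos : ∀ ℓ, 0 < a ℓ := fun ℓ =>
    div_pos one_pos (pow_pos (hw _) 2)
  have ha : Summable a := by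
    have h1 := (summable_nat_add_iff k).mpr hsum
    exact h1.congr (fun n => by simp [ha_def, Nat.add_comm])
  -- tail sums
  set T : ℕ → ℝ := fun m => ∑' i, a (m + i) with hT_def
  have hTsummable : ∀ m, Summable (fun i => a (m + i)) := by
    intro m
    exact ((summable_nat_add_iff m).mpr ha).congr (fun n => by simp [Nat.add_comm])
  have hT_eq : ∀ m, T m = a m + T (m + 1) := by
    intro m
    rw [hT_def]
    simp only
    rw [Summable.tsum_eq_zero_add (hTsummable m)]
    congr 1
    apply tsum_congr; intro i; congr 1; omega
  have hT_nonneg : ∀ m, 0 ≤ T m :=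
    fun m => tsum_nonneg (fun i => (ha_pos _).le)
  have hT_pos : ∀ m, 0 < T m := by
    intro m
    rw [hT_eq m]
    have := hT_nonneg (m + 1)
    have := ha_pos m
    linarith
  have hyp' : ∀ m, ε * T m ≤ a m := by
    intro m
    have h := hyp (k + m) (le_trans hk (Nat.le_add_right k m))
    have e1 : ∑' i : ℕ, 1 / (w (k + m + i)) ^ 2 = T m := by
      rw [hT_def]
      apply tsum_congr; intro i; simp only [ha_def, Nat.add_assoc]
    have e2 : 1 / (w (k + m)) ^ 2 = a m := rfl
    rw [e1, e2] at h
    exact h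
  have hε1 : ε ≤ 1 := by
    have h1 := hyp' 0
    have h2 : a 0 ≤ T 0 := by
      rw [hT_eq 0]; have := hT_nonneg 1; linarith
    have h3 := hT_pos 0
    nlinarith
  set x : ℝ := 1 - ε with hx_def
  have hx0 : 0 ≤ x := by linarith
  have hx1 : x < 1 := by linarith
  have hdecay : ∀ m, T m ≤ x ^ m * T 0 := by
    intro m
    induction m with
    | zero => simp
    | succ n ih =>
      have h1 : T (n + 1) = T n - a n := by rw [hT_eq n]; ring
      have h2 := hyp' n
      have h3 : T (n + 1) ≤ x * T n := by rw [h1, hx_def]; linarith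
      calc T (n + 1) ≤ x * T n := h3
        _ ≤ x * (x ^ n * T 0) := by
            apply mul_le_mul_of_nonneg_left ih hx0
        _ = x ^ (n + 1) * T 0 := by ring
  have ha_le_T : ∀ m, a m ≤ T m := by
    intro m; rw [hT_eq m]; have := hT_nonneg (m + 1); linarith
  -- Abel summation identity
  have hAbel : ∀ n : ℕ, ∑ ℓ ∈ Finset.range n, ((ℓ : ℝ) + 1) ^ 2 * a ℓ
      = ∑ m ∈ Finset.range n, (2 * (m : ℝ) + 1) * T m - (n : ℝ) ^ 2 * T n := by
    intro n
    induction n with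
    | zero => simp
    | succ n ih =>
      rw [Finset.sum_range_succ, Finset.sum_range_succ, ih]
      have h1 : a n = T n - T (n + 1) := by rw [hT_eq n]; ring
      rw [h1]
      push_cast
      ring
  -- geometric series sums
  have hxnorm : ‖x‖ < 1 := by rw [Real.norm_eq_abs, abs_lt]; constructor <;> linarith
  have hgeo1 : HasSum (fun m : ℕ => (m : ℝ) * x ^ m) (x / (1 - x) ^ 2) :=
    hasSum_coe_mul_geometric_of_norm_lt_one hxnorm
  have hgeo2 : HasSum (fun m : ℕ => x ^ m) (1 - x)⁻¹ :=
    hasSum_geometric_of_lt_one hx0 hx1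
  have hgeo : HasSum (fun m : ℕ => (2 * (m : ℝ) + 1) * x ^ m)
      (2 * (x / (1 - x) ^ 2) + (1 - x)⁻¹) := by
    have := (hgeo1.mul_left 2).add hgeo2
    exact this.congr_fun (fun m => by ring)
  have hG_le : 2 * (x / (1 - x) ^ 2) + (1 - x)⁻¹ ≤ 2 / ε ^ 2 := by
    have h1 : (1 : ℝ) - x = ε := by rw [hx_def]; ring
    rw [h1]
    have key : 2 * (x / ε ^ 2) + ε⁻¹ = (2 * x + ε) / ε ^ 2 := by
      field_simp
    rw [key]
    gcongr
    rw [hx_def]; linarith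
  -- bound on weighted partial sums
  have hpart : ∀ n : ℕ, ∑ ℓ ∈ Finset.range n, ((ℓ : ℝ) + 1) ^ 2 * a ℓ
      ≤ 2 / ε ^ 2 * T 0 := by
    intro n
    rw [hAbel n]
    have h1 : ∑ m ∈ Finset.range n, (2 * (m : ℝ) + 1) * T m
        ≤ ∑ m ∈ Finset.range n, (2 * (m : ℝ) + 1) * x ^ m * T 0 := by
      apply Finset.sum_le_sum
      intro m _
      have hm : (0:ℝ) ≤ 2 * (m : ℝ) + 1 := by positivity
      calc (2 * (m : ℝ) + 1) * T m ≤ (2 * (m : ℝ) + 1) * (x ^ m * T 0) :=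
            mul_le_mul_of_nonneg_left (hdecay m) hm
        _ = (2 * (m : ℝ) + 1) * x ^ m * T 0 := by ring
    have h2 : ∑ m ∈ Finset.range n, (2 * (m : ℝ) + 1) * x ^ m * T 0
        ≤ (2 * (x / (1 - x) ^ 2) + (1 - x)⁻¹) * T 0 := by
      rw [← Finset.sum_mul]
      apply mul_le_mul_of_nonneg_right _ (hT_nonneg 0)
      apply sum_le_hasSum _ _ hgeo
      intro m _
      positivity
    have h3 : (2 * (x / (1 - x) ^ 2) + (1 - x)⁻¹) * T 0 ≤ 2 / ε ^ 2 * T 0 :=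
      mul_le_mul_of_nonneg_right hG_le (hT_nonneg 0)
    have h4 : 0 ≤ (n : ℝ) ^ 2 * T n := mul_nonneg (by positivity) (hT_nonneg n)
    linarith
  have hT0_le : T 0 ≤ 1 / ε * (1 / (w k) ^ 2) := by
    have h1 := hyp' 0
    have h2 : a 0 = 1 / (w k) ^ 2 := by simp [ha_def]
    rw [h2] at h1
    rw [div_mul_eq_mul_div, one_mul, le_div_iff₀ hε, mul_comm]
    exact h1
  have hCbound : ∀ n : ℕ, ∑ ℓ ∈ Finset.range n, ((ℓ : ℝ) + 1) ^ 2 * a ℓ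
      ≤ 2 / ε ^ 3 * (1 / (w k) ^ 2) := by
    intro n
    calc ∑ ℓ ∈ Finset.range n, ((ℓ : ℝ) + 1) ^ 2 * a ℓ ≤ 2 / ε ^ 2 * T 0 := hpart n
      _ ≤ 2 / ε ^ 2 * (1 / ε * (1 / (w k) ^ 2)) := by
          apply mul_le_mul_of_nonneg_left hT0_le (by positivity)
      _ = 2 / ε ^ 3 * (1 / (w k) ^ 2) := by field_simp
  -- Basel problem
  have hBasel : HasSum (fun ℓ : ℕ => 1 / ((ℓ : ℝ) + 1) ^ 2) (Real.pi ^ 2 / 6) := by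
    have h2 := (hasSum_nat_add_iff' (f := fun n : ℕ => (1 : ℝ) / (n : ℝ) ^ 2) 1).mpr
      hasSum_zeta_two
    simp only [Finset.range_one, Finset.sum_singleton, Nat.cast_zero] at h2
    norm_num at h2
    exact h2.congr_fun (fun n => by push_cast; ring_nf)
  -- Cauchy-Schwarz
  set R : ℝ := (Real.pi / Real.sqrt 6) * Real.sqrt (2 / ε ^ 3) * (1 / w k) with hR_def
  have hR_nonneg : 0 ≤ R := by
    apply mul_nonneg (mul_nonneg (div_nonneg Real.pi_pos.le (Real.sqrt_nonneg _))
      (Real.sqrt_nonneg _))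
    exact (div_pos one_pos (hw k)).le
  have hR_sq : R ^ 2 = Real.pi ^ 2 / 6 * (2 / ε ^ 3) * (1 / (w k) ^ 2) := by
    rw [hR_def]
    have h6 : Real.sqrt 6 ^ 2 = 6 := Real.sq_sqrt (by norm_num)
    have hE : Real.sqrt (2 / ε ^ 3) ^ 2 = 2 / ε ^ 3 := Real.sq_sqrt (by positivity)
    rw [mul_pow, mul_pow, div_pow, h6, hE, div_pow, one_pow]
  have hb_bound : ∀ n : ℕ, ∑ ℓ ∈ Finset.range n, 1 / w (k + ℓ) ≤ R := by
    intro n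
    have hbn : 0 ≤ ∑ ℓ ∈ Finset.range n, 1 / w (k + ℓ) :=
      Finset.sum_nonneg (fun ℓ _ => (div_pos one_pos (hw _)).le)
    have hCS := Finset.sum_mul_sq_le_sq_mul_sq (Finset.range n)
      (fun ℓ => ((ℓ : ℝ) + 1) * (1 / w (k + ℓ))) (fun ℓ => 1 / ((ℓ : ℝ) + 1))
    have heq : ∀ ℓ : ℕ, (((ℓ : ℝ) + 1) * (1 / w (k + ℓ))) * (1 / ((ℓ : ℝ) + 1))
        = 1 / w (k + ℓ) := by
      intro ℓ
      have h1 : ((ℓ : ℝ) + 1) ≠ 0 := by positivity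
      have h2 : w (k + ℓ) ≠ 0 := (hw _).ne'
      field_simp
    have heq2 : ∀ ℓ : ℕ, (((ℓ : ℝ) + 1) * (1 / w (k + ℓ))) ^ 2
        = ((ℓ : ℝ) + 1) ^ 2 * a ℓ := by
      intro ℓ
      simp only [ha_def]
      rw [mul_pow, div_pow, one_pow]
    rw [Finset.sum_congr rfl (fun ℓ _ => heq ℓ),
        Finset.sum_congr rfl (fun ℓ _ => heq2 ℓ)] at hCS
    have hsq1 : ∑ ℓ ∈ Finset.range n, (1 / ((ℓ : ℝ) + 1)) ^ 2 ≤ Real.pi ^ 2 / 6 := by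
      have := sum_le_hasSum (Finset.range n) (fun ℓ _ => by positivity) hBasel
      calc ∑ ℓ ∈ Finset.range n, (1 / ((ℓ : ℝ) + 1)) ^ 2
          = ∑ ℓ ∈ Finset.range n, 1 / ((ℓ : ℝ) + 1) ^ 2 := by
            apply Finset.sum_congr rfl; intro ℓ _; rw [div_pow, one_pow]
        _ ≤ Real.pi ^ 2 / 6 := this
    have hfin : (∑ ℓ ∈ Finset.range n, 1 / w (k + ℓ)) ^ 2 ≤ R ^ 2 := by
      rw [hR_sq]
      calc (∑ ℓ ∈ Finset.range n, 1 / w (k + ℓ)) ^ 2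
          ≤ (∑ ℓ ∈ Finset.range n, ((ℓ : ℝ) + 1) ^ 2 * a ℓ)
            * ∑ ℓ ∈ Finset.range n, (1 / ((ℓ : ℝ) + 1)) ^ 2 := hCS
        _ ≤ (2 / ε ^ 3 * (1 / (w k) ^ 2)) * (Real.pi ^ 2 / 6) := by
            apply mul_le_mul (hCbound n) hsq1
            · apply Finset.sum_nonneg; intro ℓ _
              positivity
            · have := hw k
              positivity
        _ = Real.pi ^ 2 / 6 * (2 / ε ^ 3) * (1 / (w k) ^ 2) := by ring
    calc ∑ ℓ ∈ Finset.range n, 1 / w (k + ℓ)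
        = Real.sqrt ((∑ ℓ ∈ Finset.range n, 1 / w (k + ℓ)) ^ 2) :=
          (Real.sqrt_sq hbn).symm
      _ ≤ Real.sqrt (R ^ 2) := Real.sqrt_le_sqrt hfin
      _ = R := Real.sqrt_sq hR_nonneg
  exact Real.tsum_le_of_sum_range_le (fun ℓ => (div_pos one_pos (hw _)).le) hb_bound
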